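/- arXiv:1702.08321 — 3 statements merged into one kernel-verified Lean document; each statement's English description precedes it below -/
import Mathlib

section
/- For even product p·m (p even or m even, p,m ≥ 1), ∑_{k=1}^{∞} artanh(F_{pm}/F_{p(2k+m)}) = ∑_{k=1}^{m} artanh(φ^{-2pk}), where φ is the golden ratio and F the Fibonacci sequence. -/
noncomputable def phi : ℝ := (1 + Real.sqrt 5) / 2

noncomputable def artanh (x : ℝ) : ℝ := (1 / 2) * Real.log ((1 + x) / (1 - x))
open Real in
lemma fib_even (n : ℕ) (hn : Even n) : (Nat.fib n : ℝ) = (phi ^ n - (phi ^ n)⁻¹) / Real.sqrt 5 := by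
  rw [Real.coe_fib_eq]
  have hψ : goldenConj = -phi⁻¹ := by
    have h := goldenRatio_mul_goldenConj
    have : goldenRatio ≠ 0 := goldenRatio_ne_zero
    show goldenConj = -goldenRatio⁻¹
    rw [inv_goldenRatio, neg_neg]
  rw [hψ, neg_pow, hn.neg_one_pow, inv_pow]
  simp only [phi, goldenRatio]
  ring

open Real in
lemma one_lt_phi : 1 < phi := one_lt_goldenRatio
lemma phi_pos : 0 < phi := lt_trans one_pos one_lt_phi

lemma key (p m K : ℕ) (hp : 1 ≤ p) (hm : 1 ≤ m) (hK : 1 ≤ K) (hpm : Even (p * m)) :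
    artanh ((Nat.fib (p * m) : ℝ) / (Nat.fib (p * (2 * K + m)) : ℝ)) =
      artanh ((phi ^ (2 * p * K))⁻¹) - artanh ((phi ^ (2 * p * (m + K)))⁻¹) := by
  have hphi := one_lt_phi
  have hphi0 := phi_pos
  have h5 : Real.sqrt 5 ≠ 0 := by positivity
  set a := p * m with ha
  set N := p * (2 * K + m) with hN
  have hEN : Even N := by
    have : N = 2 * (p * K) + p * m := by rw [hN]; ring
    rw [this]; exact (even_two_mul _).add hpm
  have hfa := fib_even a hpm
  have hfN := fib_even N hEN
  have ha1 : 1 ≤ a := Nat.one_le_iff_ne_zero.mpr (by positivity)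
  have haN : a + 2 ≤ N := by
    have : N = a + 2 * (p * K) := by rw [hN, ha]; ring
    nlinarith [hp, hK, Nat.one_le_iff_ne_zero.mp hp]
  have hfib_lt : Nat.fib a < Nat.fib N := by
    calc Nat.fib a < Nat.fib (a + 2) := by
            have := Nat.fib_pos.mpr (show 0 < a + 1 by omega)
            rw [Nat.fib_add_two]; omega
      _ ≤ Nat.fib N := Nat.fib_mono haN
  have hA0 : (0:ℝ) < Nat.fib a := by exact_mod_cast Nat.fib_pos.mpr (by omega)
  have hAB : (Nat.fib a : ℝ) < Nat.fib N := by exact_mod_cast hfib_lt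
  set A := (Nat.fib a : ℝ)
  set B := (Nat.fib N : ℝ)
  set q1 := (phi ^ (2 * p * K))⁻¹ with hq1
  set q2 := (phi ^ (2 * p * (m + K)))⁻¹ with hq2
  have hq1pos : 0 < q1 := by rw [hq1]; positivity
  have hq2pos : 0 < q2 := by rw [hq2]; positivity
  have hq1lt : q1 < 1 := by
    rw [hq1, inv_lt_one_iff₀]
    right; exact one_lt_pow₀ hphi (by positivity)
  have hq2lt : q2 < 1 := by
    rw [hq2, inv_lt_one_iff₀]
    right; exact one_lt_pow₀ hphi (by positivity)
  have hB0 : (0:ℝ) < B := lt_trans hA0 hAB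
  have step1 : (1 + A / B) / (1 - A / B) = (B + A) / (B - A) := by
    rw [div_eq_div_iff]
    · field_simp
    · have : A / B < 1 := (div_lt_one hB0).mpr hAB
      linarith
    · linarith
  have step2 : (B + A) / (B - A) = ((1 + q1) / (1 - q1)) * ((1 - q2) / (1 + q2)) := by
    rw [div_mul_div_comm, div_eq_div_iff (by linarith) (by nlinarith)]
    rw [hfa, hfN, hq1, hq2]
    simp only [ha, hN]
    have hne : phi ≠ 0 := ne_of_gt hphi0
    field_simp
    ring
  unfold artanh
  rw [step1, step2]
  rw [Real.log_mul (ne_of_gt (div_pos (by linarith) (by linarith)))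
        (ne_of_gt (div_pos (by linarith) (by linarith))),
      show (1 - q2) / (1 + q2) = ((1 + q2) / (1 - q2))⁻¹ by rw [inv_div],
      Real.log_inv]
  ring

noncomputable def gg (p k : ℕ) : ℝ := artanh ((phi ^ (2 * p * k))⁻¹)

lemma artanh_zero : artanh 0 = 0 := by unfold artanh; norm_num

lemma artanh_contAt : ContinuousAt artanh 0 := by
  unfold artanh
  exact continuousAt_const.mul ((Real.continuousAt_log (by norm_num)).comp
    (((continuousAt_const.add continuousAt_id).div
      (continuousAt_const.sub continuousAt_id) (by norm_num))))

lemma gg_tendsto (p : ℕ) (hp : 1 ≤ p) : Filter.Tendsto (gg p) Filter.atTop (nhds 0) := by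
  have h1 : Filter.Tendsto (fun n : ℕ => (phi⁻¹) ^ n) Filter.atTop (nhds 0) :=
    tendsto_pow_atTop_nhds_zero_of_lt_one (inv_nonneg.mpr phi_pos.le) (by
      rw [inv_lt_one_iff₀]; right; exact one_lt_phi)
  have h2 : Filter.Tendsto (fun n : ℕ => 2 * p * n) Filter.atTop Filter.atTop :=
    Filter.tendsto_atTop_mono (fun n => Nat.le_mul_of_pos_left n (by omega))
      Filter.tendsto_id
  have h3 : Filter.Tendsto (fun n : ℕ => (phi ^ (2 * p * n))⁻¹) Filter.atTop (nhds 0) := by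
    have := h1.comp h2
    simpa [inv_pow, Function.comp_def] using this
  have := (artanh_contAt.tendsto).comp h3
  rw [artanh_zero] at this
  exact this

lemma artanh_nonneg {x : ℝ} (h0 : 0 ≤ x) (h1 : x < 1) : 0 ≤ artanh x := by
  unfold artanh
  have h2 : (1:ℝ) ≤ (1 + x) / (1 - x) := by
    rw [le_div_iff₀ (by linarith)]; linarith
  have := Real.log_nonneg h2
  linarith

theorem stmt_9 (p m : ℕ) (hp : 1 ≤ p) (hm : 1 ≤ m) (hpm : Even (p * m)) :
    ∑' k : ℕ, artanh ((Nat.fib (p * m) : ℝ) / (Nat.fib (p * (2 * (k + 1) + m)) : ℝ)) =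
      ∑ k ∈ Finset.Icc 1 m, artanh (phi ^ (-(2 * p * k : ℤ))) := by
  set f : ℕ → ℝ :=
    fun k => artanh ((Nat.fib (p * m) : ℝ) / (Nat.fib (p * (2 * (k + 1) + m)) : ℝ)) with hf
  have hconv : ∀ k : ℕ, artanh (phi ^ (-(2 * p * k : ℤ))) = gg p k := by
    intro k
    unfold gg
    congr 1
    rw [show (-(2 * (p:ℤ) * (k:ℤ))) = -((2 * p * k : ℕ) : ℤ) by push_cast; ring,
      zpow_neg, zpow_natCast]
  have hterm : ∀ k : ℕ, f k = gg p (k + 1) - gg p (m + (k + 1)) := by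
    intro k
    rw [hf]
    have := key p m (k + 1) hp hm (by omega) hpm
    simpa [gg] using this
  -- nonnegativity
  have hnn : ∀ k : ℕ, 0 ≤ f k := by
    intro k
    rw [hf]
    have h1 : 1 ≤ p * m := Nat.one_le_iff_ne_zero.mpr (by positivity)
    have hlt : Nat.fib (p * m) < Nat.fib (p * (2 * (k + 1) + m)) := by
      have hle : p * m + 2 ≤ p * (2 * (k + 1) + m) := by nlinarith
      calc Nat.fib (p * m) < Nat.fib (p * m + 2) := by
            have := Nat.fib_pos.mpr (show 0 < p * m + 1 by omega)
            rw [Nat.fib_add_two]; omega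
        _ ≤ _ := Nat.fib_mono hle
    have hB : (0:ℝ) < (Nat.fib (p * (2 * (k + 1) + m)) : ℝ) := by
      exact_mod_cast Nat.fib_pos.mpr (by nlinarith)
    apply artanh_nonneg
    · positivity
    · rw [div_lt_one hB]; exact_mod_cast hlt
  set H : ℕ → ℝ := fun n => ∑ j ∈ Finset.Icc 1 m, gg p (j + n) with hH
  have hrange : ∀ n, H n = ∑ i ∈ Finset.range m, gg p (1 + i + n) := by
    intro n
    simp only [hH]
    rw [show Finset.Icc 1 m = Finset.Ico 1 (m + 1) by rw [Finset.Ico_add_one_right_eq_Icc],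
      Finset.sum_Ico_eq_sum_range]
    simp
  have hHdiff : ∀ k : ℕ, f k = H k - H (k + 1) := by
    intro k
    rw [hrange, hrange, ← Finset.sum_sub_distrib]
    have : ∀ i ∈ Finset.range m,
        gg p (1 + i + k) - gg p (1 + i + (k + 1)) =
        (fun i => gg p (1 + i + k)) i - (fun i => gg p (1 + i + k)) (i + 1) := by
      intro i _
      simp only []
      congr 2
      omega
    rw [Finset.sum_congr rfl this, Finset.sum_range_sub' (fun i => gg p (1 + i + k)) m]
    rw [hterm k]
    congr 2 <;> omega
  have hpart : ∀ n, ∑ i ∈ Finset.range n, f i = H 0 - H n := by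
    intro n
    rw [Finset.sum_congr rfl (fun i _ => hHdiff i)]
    exact Finset.sum_range_sub' H n
  have hHtend : Filter.Tendsto H Filter.atTop (nhds 0) := by
    rw [hH]
    have : ∀ j : ℕ, Filter.Tendsto (fun n => gg p (j + n)) Filter.atTop (nhds 0) := by
      intro j
      exact (gg_tendsto p hp).comp
        (Filter.tendsto_atTop_mono (fun n => Nat.le_add_left n j) Filter.tendsto_id)
    have := tendsto_finset_sum (Finset.Icc 1 m) (fun j _ => this j)
    simpa using this
  have hsum : HasSum f (H 0) := by
    rw [hasSum_iff_tendsto_nat_of_nonneg hnn]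
    have : (fun n => ∑ i ∈ Finset.range n, f i) = fun n => H 0 - H n := funext hpart
    rw [this]
    simpa using hHtend.const_sub (H 0)
  rw [hsum.tsum_eq, Finset.sum_congr rfl (fun k _ => hconv k)]
  rw [hH]
  simp
end

section
/- For all positive integers q, n, ∏_{k=1}^{∞} (L_{(2n-1)(2k+2q-1)} + L_{(2n-1)(2q-1)})/(L_{(2n-1)(2k+2q-1)} - L_{(2n-1)(2q-1)}) = √5 · ∏_{k=1}^{q} F_{(2k-1)(2n-1)}/L_{(2k-1)(2n-1)} · ∏_{k=1}^{q-1} L_{2k(2n-1)}/F_{2k(2n-1)}. -/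
def lucas : ℕ → ℕ
  | 0 => 2
  | 1 => 1
  | n + 2 => lucas n + lucas (n + 1)

open Real Filter Finset goldenRatio

lemma lucas_pos (n : ℕ) : 0 < lucas n := by
  induction n using Nat.twoStepInduction with
  | zero => simp [lucas]
  | one => simp [lucas]
  | more n h1 h2 => rw [lucas]; omega

lemma lucas_step (n : ℕ) : lucas (n+1) < lucas (n+2) := by
  have h : lucas (n+2) = lucas n + lucas (n+1) := rfl
  have := lucas_pos n; omega

lemma lucas_mono {a b : ℕ} (ha : 1 ≤ a) (h : a ≤ b) : lucas a ≤ lucas b := by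
  induction b, h using Nat.le_induction with
  | base => rfl
  | succ b hb ih =>
    refine le_trans ih ?_
    obtain ⟨c, rfl⟩ : ∃ c, b = c + 1 := ⟨b - 1, by omega⟩
    exact (lucas_step c).le

lemma lucas_geo (y j : ℕ) (hy : 1 ≤ y) : lucas y * 2^j ≤ lucas (y + 2*j) := by
  induction j with
  | zero => simp
  | succ j ih =>
    have h1 : lucas (y + 2*j) ≤ lucas (y + 2*j + 1) := lucas_mono (by omega) (by omega)
    have h2 : lucas (y + 2*(j+1)) = lucas (y+2*j) + lucas (y+2*j+1) := by
      have : y + 2*(j+1) = (y+2*j) + 2 := by ring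
      rw [this]; rfl
    have : lucas y * 2^(j+1) = lucas y * 2^j + lucas y * 2^j := by ring
    omega

lemma lucas_real (N : ℕ) : (lucas N : ℝ) = φ^N + ψ^N := by
  induction N using Nat.twoStepInduction with
  | zero => norm_num [lucas]
  | one => have := goldenRatio_add_goldenConj; simp [lucas]
  | more n h1 h2 =>
    have h : (lucas (n+2) : ℝ) = (lucas n : ℝ) + lucas (n+1) := by
      have : lucas (n+2) = lucas n + lucas (n+1) := rfl
      rw [this]; push_cast; ring
    have e1 : φ^(n+2) = φ^n * (φ + 1) := by rw [← goldenRatio_sq]; ring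
    have e2 : ψ^(n+2) = ψ^n * (ψ + 1) := by rw [← goldenConj_sq]; ring
    rw [h, h1, h2, e1, e2]; ring

lemma fib_real (N : ℕ) : √5 * (Nat.fib N : ℝ) = φ^N - ψ^N := by
  rw [Real.coe_fib_eq]
  have h5 : (√5 : ℝ) ≠ 0 := by positivity
  field_simp

lemma lucas_mul_lucas {a b : ℕ} (h : b ≤ a) :
    (lucas a : ℝ) * lucas b = (lucas (a+b) : ℝ) + (-1)^b * lucas (a - b) := by
  obtain ⟨c, rfl⟩ := Nat.exists_eq_add_of_le h
  have h1 : b + c - b = c := by omega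
  rw [h1]
  simp only [lucas_real]
  rw [← goldenRatio_mul_goldenConj, mul_pow]
  ring

lemma five_fib_mul {a b : ℕ} (h : b ≤ a) :
    5 * (Nat.fib a : ℝ) * Nat.fib b = (lucas (a+b) : ℝ) - (-1)^b * lucas (a - b) := by
  obtain ⟨c, rfl⟩ := Nat.exists_eq_add_of_le h
  have h1 : b + c - b = c := by omega
  have s5 : (√5 : ℝ) * √5 = 5 := Real.mul_self_sqrt (by norm_num)
  have key : 5 * (Nat.fib (b+c) : ℝ) * Nat.fib b = (√5 * Nat.fib (b+c)) * (√5 * Nat.fib b) := by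
    rw [show (√5 * (Nat.fib (b+c):ℝ)) * (√5 * Nat.fib b) = (√5*√5) * (Nat.fib (b+c) * Nat.fib b) from by ring, s5]; ring
  rw [h1, key, fib_real, fib_real]
  simp only [lucas_real]
  rw [← goldenRatio_mul_goldenConj, mul_pow]
  ring

noncomputable def uu (m j : ℕ) : ℝ :=
  if j % 2 = 1 then √5 * Nat.fib (m*j) / lucas (m*j)
  else (lucas (m*j) : ℝ) / (√5 * Nat.fib (m*j))

lemma sqrt5_pos : (0:ℝ) < √5 := Real.sqrt_pos.mpr (by norm_num)

lemma fib_pos' {m j : ℕ} (hm : 1 ≤ m) (hj : 1 ≤ j) : (0:ℝ) < Nat.fib (m*j) := by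
  exact_mod_cast Nat.fib_pos.mpr (by positivity)

lemma lucas_pos' (N : ℕ) : (0:ℝ) < lucas N := by exact_mod_cast lucas_pos N

lemma uu_pos {m j : ℕ} (hm : 1 ≤ m) (hj : 1 ≤ j) : 0 < uu m j := by
  unfold uu
  have := fib_pos' hm hj
  have := lucas_pos' (m*j)
  have := sqrt5_pos
  split <;> positivity

lemma uu_ne {m j : ℕ} (hm : 1 ≤ m) (hj : 1 ≤ j) : uu m j ≠ 0 := (uu_pos hm hj).ne'

lemma term_eq (m r K : ℕ) (hm : Odd m) (hr : Odd r) (hK : 1 ≤ K) :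
    ((lucas (m*(2*K+r)) : ℝ) + lucas (m*r)) / ((lucas (m*(2*K+r)) : ℝ) - lucas (m*r))
      = uu m K / uu m (K+r) := by
  have hm1 : 1 ≤ m := hm.pos
  have hr1 : 1 ≤ r := hr.pos
  have hba : m*K ≤ m*(K+r) := Nat.mul_le_mul_left _ (by omega)
  have hab : m*(K+r) + m*K = m*(2*K+r) := by ring
  have hsub : m*(K+r) - m*K = m*r := by
    have : m*(K+r) = m*K + m*r := by ring
    omega
  have I1 := lucas_mul_lucas hba
  have I2 := five_fib_mul hba
  rw [hab, hsub] at I1 I2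
  have hparity : ((-1:ℝ))^(m*K) = (-1)^K := by
    rw [pow_mul, hm.neg_one_pow]
  rw [hparity] at I1 I2
  have hfa := fib_pos' hm1 (show 1 ≤ K + r by omega)
  have hfb := fib_pos' hm1 hK
  have hla := lucas_pos' (m*(K+r))
  have hlb := lucas_pos' (m*K)
  have s5 : (√5 : ℝ) * √5 = 5 := Real.mul_self_sqrt (by norm_num)
  have h5 := sqrt5_pos
  rcases Nat.even_or_odd K with hKe | hKo
  · have hK2 : K % 2 = 0 := Nat.even_iff.mp hKe
    have hKr2 : (K + r) % 2 = 1 := by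
      have := Nat.odd_iff.mp hr; omega
    have e1 : (-1:ℝ)^K = 1 := hKe.neg_one_pow
    rw [e1, one_mul] at I1 I2
    rw [show ((lucas (m*(2*K+r)) : ℝ) + lucas (m*r)) = (lucas (m*(K+r)) : ℝ) * lucas (m*K) from by linarith,
        show ((lucas (m*(2*K+r)) : ℝ) - lucas (m*r)) = 5 * Nat.fib (m*(K+r)) * Nat.fib (m*K) from by linarith]
    unfold uu
    rw [if_neg (by omega), if_pos hKr2]
    rw [div_div_div_comm]
    field_simp
    linear_combination s5
  · have hK2 : K % 2 = 1 := Nat.odd_iff.mp hKo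
    have hKr2 : (K + r) % 2 = 0 := by
      have := Nat.odd_iff.mp hr; omega
    have e1 : (-1:ℝ)^K = -1 := hKo.neg_one_pow
    rw [e1] at I1 I2
    rw [show ((lucas (m*(2*K+r)) : ℝ) + lucas (m*r)) = 5 * Nat.fib (m*(K+r)) * Nat.fib (m*K) from by linarith,
        show ((lucas (m*(2*K+r)) : ℝ) - lucas (m*r)) = (lucas (m*(K+r)) : ℝ) * lucas (m*K) from by linarith]
    unfold uu
    rw [if_pos hK2, if_neg (by omega)]
    rw [div_div_div_comm]
    field_simp
    linear_combination (-1 : ℝ) * s5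
lemma H_tendsto {m : ℕ} (hm : 1 ≤ m) :
    Tendsto (fun j => √5 * (Nat.fib (m*j) : ℝ) / lucas (m*j)) atTop (nhds 1) := by
  have habs : |ψ / φ| < 1 := by
    rw [abs_div, div_lt_one (by rw [abs_of_pos goldenRatio_pos]; exact goldenRatio_pos),
      abs_of_pos goldenRatio_pos, abs_of_neg goldenConj_neg]
    have h1 := neg_one_lt_goldenConj
    have h2 := one_lt_goldenRatio
    linarith
  have habs2 : |(ψ / φ)^m| < 1 := by
    rw [abs_pow]
    calc |ψ/φ|^m ≤ |ψ/φ|^1 := pow_le_pow_of_le_one (abs_nonneg _) habs.le hm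
    _ < 1 := by simpa using habs
  have hT : Tendsto (fun j : ℕ => ((ψ/φ)^m)^j) atTop (nhds 0) :=
    tendsto_pow_atTop_nhds_zero_of_abs_lt_one habs2
  have heq : ∀ j : ℕ, √5 * (Nat.fib (m*j) : ℝ) / lucas (m*j)
      = (1 - ((ψ/φ)^m)^j) / (1 + ((ψ/φ)^m)^j) := by
    intro j
    have hgp : (0:ℝ) < φ^(m*j) := pow_pos goldenRatio_pos _
    have hsum : (0:ℝ) < φ^(m*j) + ψ^(m*j) := by
      rw [← lucas_real]; exact lucas_pos' (m*j)
    have ht : ((ψ/φ)^m)^j = ψ^(m*j) / φ^(m*j) := by rw [← pow_mul, div_pow]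
    have hA : (φ^(m*j) + ψ^(m*j))/φ^(m*j) = 1 + ψ^(m*j)/φ^(m*j) := by
      rw [add_div, div_self (ne_of_gt hgp)]
    have hB : (φ^(m*j) - ψ^(m*j))/φ^(m*j) = 1 - ψ^(m*j)/φ^(m*j) := by
      rw [sub_div, div_self (ne_of_gt hgp)]
    rw [fib_real, lucas_real, ht, ← hA, ← hB, div_div_div_comm,
      div_self (ne_of_gt hgp), div_one]
  have hc : Tendsto (fun _ : ℕ => (1:ℝ)) atTop (nhds 1) := tendsto_const_nhds
  have key := Tendsto.div (hc.sub hT) (hc.add hT) (by norm_num : (1:ℝ) + 0 ≠ 0)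
  rw [show ((1:ℝ)-0)/(1+0) = 1 by norm_num] at key
  exact Filter.Tendsto.congr (fun j => (heq j).symm) key

lemma uu_tendsto {m : ℕ} (hm : 1 ≤ m) : Tendsto (uu m) atTop (nhds 1) := by
  have hH := H_tendsto hm
  have hHinv : Tendsto (fun j => (√5 * (Nat.fib (m*j) : ℝ) / lucas (m*j))⁻¹) atTop (nhds 1) := by
    simpa using hH.inv₀ one_ne_zero
  have hmin := hH.min hHinv
  have hmax := hH.max hHinv
  simp only [min_self, max_self] at hmin hmax
  refine tendsto_of_tendsto_of_tendsto_of_le_of_le hmin hmax ?_ ?_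
  · intro j
    unfold uu
    split
    · exact min_le_left _ _
    · rw [show (lucas (m*j) : ℝ) / (√5 * Nat.fib (m*j))
          = (√5 * (Nat.fib (m*j) : ℝ) / lucas (m*j))⁻¹ from (inv_div _ _).symm]
      exact min_le_right _ _
  · intro j
    unfold uu
    split
    · exact le_max_left _ _
    · rw [show (lucas (m*j) : ℝ) / (√5 * Nat.fib (m*j))
          = (√5 * (Nat.fib (m*j) : ℝ) / lucas (m*j))⁻¹ from (inv_div _ _).symm]
      exact le_max_right _ _

lemma prod_uu (m : ℕ) (hm : 1 ≤ m) : ∀ q : ℕ, 1 ≤ q →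
    ∏ j ∈ Ico 1 (2*q-1+1), uu m j
      = √5 * (∏ k ∈ Icc 1 q, (Nat.fib (m*(2*k-1)) : ℝ) / lucas (m*(2*k-1)))
        * ∏ k ∈ Icc 1 (q-1), (lucas (m*(2*k)) : ℝ) / Nat.fib (m*(2*k)) := by
  intro q
  induction q with
  | zero => omega
  | succ q ih =>
    intro _
    obtain rfl | hq1 : q = 0 ∨ 1 ≤ q := by omega
    · rw [show 2*(0+1)-1+1 = 1+1 from rfl, Finset.prod_Ico_succ_top (le_refl 1),
        Finset.Ico_self, Finset.prod_empty, one_mul]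
      rw [show (0+1:ℕ) = 1 from rfl, Finset.Icc_self, Finset.prod_singleton]
      rw [show (1:ℕ)-1 = 0 from rfl, Finset.Icc_eq_empty (by omega), Finset.prod_empty]
      unfold uu
      rw [if_pos (by norm_num)]
      rw [mul_one, mul_div_assoc]
      norm_num
    · obtain ⟨p, rfl⟩ : ∃ p, q = p + 1 := ⟨q - 1, by omega⟩
      have ih' := ih (by omega)
      rw [show 2*(p+1)-1+1 = 2*p+2 from by omega] at ih'
      simp only [Nat.add_sub_cancel] at ih'
      have hu2 : uu m (2*p+2) = (lucas (m*(2*p+2)) : ℝ) / (√5 * Nat.fib (m*(2*p+2))) := by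
        unfold uu; rw [if_neg (by omega)]
      have hu3 : uu m (2*p+2+1) = √5 * (Nat.fib (m*(2*p+3)) : ℝ) / lucas (m*(2*p+3)) := by
        unfold uu; rw [if_pos (by omega), show 2*p+2+1 = 2*p+3 from rfl]
      have hL : ∏ j ∈ Ico 1 (2*p+2+1+1), uu m j
          = √5 * (∏ k ∈ Icc 1 (p+1), (Nat.fib (m*(2*k-1)) : ℝ) / lucas (m*(2*k-1)))
            * (∏ k ∈ Icc 1 p, (lucas (m*(2*k)) : ℝ) / Nat.fib (m*(2*k)))
            * ((lucas (m*(2*p+2)) : ℝ) / (√5 * Nat.fib (m*(2*p+2))))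
            * (√5 * (Nat.fib (m*(2*p+3)) : ℝ) / lucas (m*(2*p+3))) := by
        rw [Finset.prod_Ico_succ_top (by omega), Finset.prod_Ico_succ_top (by omega), ih',
          hu2, hu3]
      rw [show 2*(p+1+1)-1+1 = 2*p+2+1+1 from by omega, hL]
      rw [Finset.prod_Icc_succ_top (by omega : 1 ≤ (p+1)+1)
        (fun k => (Nat.fib (m*(2*k-1)) : ℝ) / lucas (m*(2*k-1)))]
      simp only [Nat.add_sub_cancel]
      rw [Finset.prod_Icc_succ_top (by omega : 1 ≤ p+1)
        (fun k => (lucas (m*(2*k)) : ℝ) / Nat.fib (m*(2*k)))]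
      rw [show 2*(p+1+1)-1 = 2*p+3 from by omega, show 2*(p+1) = 2*p+2 from by omega]
      have hf2 := fib_pos' hm (show 1 ≤ 2*p+2 by omega)
      have hl3 := lucas_pos' (m*(2*p+3))
      have h5 := sqrt5_pos
      have gen : ∀ (A B L2 F2 F3 L3 s : ℝ), F2 ≠ 0 → L3 ≠ 0 → s ≠ 0 →
          s * A * B * (L2/(s*F2)) * (s*F3/L3) = s * (A * (F3/L3)) * (B * (L2/F2)) := by
        intros A B L2 F2 F3 L3 s h1 h2 h3
        field_simp
      exact gen _ _ _ _ _ _ _ hf2.ne' hl3.ne' h5.ne'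
theorem stmt_12 (q n : ℕ) (hq : 0 < q) (hn : 0 < n) :
    ∏' k : ℕ,
        ((lucas ((2 * n - 1) * (2 * (k + 1) + 2 * q - 1)) : ℝ) + (lucas ((2 * n - 1) * (2 * q - 1)) : ℝ)) /
          ((lucas ((2 * n - 1) * (2 * (k + 1) + 2 * q - 1)) : ℝ) - (lucas ((2 * n - 1) * (2 * q - 1)) : ℝ)) =
      Real.sqrt 5 *
        (∏ k ∈ Finset.Icc 1 q,
            (Nat.fib ((2 * k - 1) * (2 * n - 1)) : ℝ) / (lucas ((2 * k - 1) * (2 * n - 1)) : ℝ)) *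
        ∏ k ∈ Finset.Icc 1 (q - 1),
          (lucas (2 * k * (2 * n - 1)) : ℝ) / (Nat.fib (2 * k * (2 * n - 1)) : ℝ) := by
  set m := 2 * n - 1 with hmdef
  set r := 2 * q - 1 with hrdef
  have hm1 : 1 ≤ m := by omega
  have hr1 : 1 ≤ r := by omega
  have hmodd : Odd m := by rw [Nat.odd_iff]; omega
  have hrodd : Odd r := by rw [Nat.odd_iff]; omega
  set G : ℕ → ℝ := fun k => uu m (k+1) / uu m (k+1+r) with hGdef
  have key : ∀ k : ℕ, ((lucas (m * (2 * (k + 1) + 2 * q - 1)) : ℝ) + (lucas (m * r) : ℝ)) /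
      ((lucas (m * (2 * (k + 1) + 2 * q - 1)) : ℝ) - (lucas (m * r) : ℝ)) = G k := by
    intro k
    have h1 : 2 * (k + 1) + 2 * q - 1 = 2 * (k + 1) + r := by omega
    rw [h1]
    exact term_eq m r (k+1) hmodd hrodd (by omega)
  have h0 : (∏' k : ℕ, ((lucas (m * (2 * (k + 1) + 2 * q - 1)) : ℝ) + (lucas (m * r) : ℝ)) /
      ((lucas (m * (2 * (k + 1) + 2 * q - 1)) : ℝ) - (lucas (m * r) : ℝ))) = ∏' k, G k :=
    tprod_congr key
  rw [h0]
  have hGpos : ∀ k, 0 < G k := fun k =>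
    div_pos (uu_pos hm1 (by omega)) (uu_pos hm1 (by omega))
  have hrep : ∀ k : ℕ, G k = ((lucas (m*(2*(k+1)+r)) : ℝ) + lucas (m*r)) /
      ((lucas (m*(2*(k+1)+r)) : ℝ) - lucas (m*r)) :=
    fun k => (term_eq m r (k+1) hmodd hrodd (by omega)).symm
  have hmr : 1 ≤ m * r := Nat.one_le_iff_ne_zero.mpr (Nat.mul_ne_zero (by omega) (by omega))
  have hDen : ∀ k : ℕ, (2:ℝ)^k ≤ (lucas (m*(2*(k+1)+r)) : ℝ) - lucas (m*r) := by
    intro k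
    have h2' : 2*(k+1) ≤ m*(2*(k+1)) := Nat.le_mul_of_pos_left _ (by omega)
    have hsplit : m*(2*(k+1)+r) = m*r + m*(2*(k+1)) := by ring
    have hidx : m*r + 2*(k+1) ≤ m*(2*(k+1)+r) := by omega
    have hmono : lucas (m*r + 2*(k+1)) ≤ lucas (m*(2*(k+1)+r)) := lucas_mono (by omega) hidx
    have hgeo := lucas_geo (m*r) (k+1) hmr
    have c1 : ((lucas (m*r) : ℝ)) * 2^(k+1) ≤ (lucas (m*(2*(k+1)+r)) : ℝ) := by
      exact_mod_cast hgeo.trans hmono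
    have c2 : (1:ℝ) ≤ lucas (m*r) := by exact_mod_cast lucas_pos (m*r)
    have c3 : (0:ℝ) < 2^k := by positivity
    have c3' : (1:ℝ) ≤ 2^k := one_le_pow₀ (by norm_num)
    have c1' : 2*((lucas (m*r):ℝ) * 2^k) ≤ (lucas (m*(2*(k+1)+r)) : ℝ) := by
      calc 2*((lucas (m*r):ℝ) * 2^k) = (lucas (m*r):ℝ)*2^(k+1) := by ring
      _ ≤ _ := c1
    have c4' : 2*((lucas (m*r):ℝ) * 2^k) - (lucas (m*r):ℝ) - 2*2^k + 1 ≥ 0 := by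
      nlinarith [c2, c3']
    linarith
  have hDenpos : ∀ k, (0:ℝ) < (lucas (m*(2*(k+1)+r)) : ℝ) - lucas (m*r) :=
    fun k => lt_of_lt_of_le (by positivity) (hDen k)
  have hG1 : ∀ k, 1 ≤ G k := by
    intro k
    rw [hrep k, le_div_iff₀ (hDenpos k)]
    have := lucas_pos' (m*r)
    linarith
  have hGsub : ∀ k : ℕ, G k - 1 ≤ 2 * (lucas (m*r) : ℝ) * (1/2)^k := by
    intro k
    have hd := hDenpos k
    have h2 := hDen k
    rw [hrep k, div_sub_one hd.ne']
    rw [show ((lucas (m*(2*(k+1)+r)) : ℝ) + lucas (m*r)) - ((lucas (m*(2*(k+1)+r)) : ℝ) - lucas (m*r))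
        = 2 * lucas (m*r) from by ring]
    rw [div_le_iff₀ hd]
    have e : ((1:ℝ)/2)^k * 2^k = 1 := by rw [← mul_pow]; norm_num
    have hlp := lucas_pos' (m*r)
    nlinarith [mul_le_mul_of_nonneg_left h2 (by positivity : (0:ℝ) ≤ 2*(lucas (m*r):ℝ)*(1/2)^k)]
  have hlog : Summable (fun k => Real.log (G k)) := by
    refine Summable.of_nonneg_of_le (fun k => Real.log_nonneg (hG1 k))
      (fun k => (Real.log_le_sub_one_of_pos (hGpos k)).trans (hGsub k)) ?_
    exact (summable_geometric_of_lt_one (by norm_num) (by norm_num)).mul_left _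
  have hProd : HasProd G (Real.exp (∑' k, Real.log (G k))) := by
    have h1 := hlog.hasSum.rexp
    exact h1.congr_fun (fun k => (Real.exp_log (hGpos k)).symm)
  have hMult : Multipliable G := ⟨_, hProd⟩
  have ht1 : Tendsto (fun K => ∏ i ∈ Finset.range K, G i) atTop
      (nhds (Real.exp (∑' k, Real.log (G k)))) := hProd.tendsto_prod_nat
  set C := ∏ j ∈ Finset.Ico 1 (r+1), uu m j with hCdef
  have htel : ∀ K, r ≤ K → ∏ i ∈ Finset.range K, G i
      = C / ∏ j ∈ Finset.Ico (K+1) (K+r+1), uu m j := by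
    intro K hK
    have h1 : ∏ i ∈ Finset.range K, G i
        = (∏ i ∈ Finset.range K, uu m (i+1)) / (∏ i ∈ Finset.range K, uu m (i+1+r)) := by
      rw [← Finset.prod_div_distrib]
    have h2 : ∏ i ∈ Finset.range K, uu m (i+1) = ∏ j ∈ Finset.Ico 1 (K+1), uu m j := by
      rw [Finset.prod_Ico_eq_prod_range]
      exact Finset.prod_congr (by rw [show K+1-1 = K from by omega])
        (fun i _ => by rw [show 1+i = i+1 from by omega])
    have h3 : ∏ i ∈ Finset.range K, uu m (i+1+r) = ∏ j ∈ Finset.Ico (r+1) (K+r+1), uu m j := by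
      rw [Finset.prod_Ico_eq_prod_range]
      exact Finset.prod_congr (by rw [show K+r+1-(r+1) = K from by omega])
        (fun i _ => by rw [show r+1+i = i+1+r from by omega])
    have h4 : ∏ j ∈ Finset.Ico 1 (K+1), uu m j
        = C * ∏ j ∈ Finset.Ico (r+1) (K+1), uu m j :=
      (Finset.prod_Ico_consecutive _ (by omega) (by omega)).symm
    have h5 : ∏ j ∈ Finset.Ico (r+1) (K+r+1), uu m j
        = (∏ j ∈ Finset.Ico (r+1) (K+1), uu m j) * ∏ j ∈ Finset.Ico (K+1) (K+r+1), uu m j :=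
      (Finset.prod_Ico_consecutive _ (by omega) (by omega)).symm
    have hM : (∏ j ∈ Finset.Ico (r+1) (K+1), uu m j) ≠ 0 :=
      Finset.prod_ne_zero_iff.mpr (fun j hj => uu_ne hm1 (by
        have := (Finset.mem_Ico.mp hj).1; omega))
    rw [h1, h2, h3, h4, h5, mul_comm C _, mul_div_mul_left _ _ hM]
  have htail : Tendsto (fun K => ∏ j ∈ Finset.Ico (K+1) (K+r+1), uu m j) atTop (nhds 1) := by
    have hre : ∀ K, ∏ j ∈ Finset.Ico (K+1) (K+r+1), uu m j
        = ∏ i ∈ Finset.range r, uu m (K+1+i) := by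
      intro K
      rw [Finset.prod_Ico_eq_prod_range]
      exact Finset.prod_congr (by rw [show K+r+1-(K+1) = r from by omega]) (fun i _ => rfl)
    have hbase : Tendsto (fun K => ∏ i ∈ Finset.range r, uu m (K+1+i)) atTop
        (nhds (∏ _i ∈ Finset.range r, (1:ℝ))) := by
      refine tendsto_finset_prod _ (fun i _ => ?_)
      exact (uu_tendsto hm1).comp ((tendsto_add_atTop_nat i).comp (tendsto_add_atTop_nat 1))
    rw [Finset.prod_const_one] at hbase
    exact Tendsto.congr (fun K => (hre K).symm) hbase
  have ht2 : Tendsto (fun K => ∏ i ∈ Finset.range K, G i) atTop (nhds C) := by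
    have hdiv : Tendsto (fun K => C / ∏ j ∈ Finset.Ico (K+1) (K+r+1), uu m j) atTop
        (nhds (C/1)) := Tendsto.div tendsto_const_nhds htail one_ne_zero
    rw [div_one] at hdiv
    apply hdiv.congr'
    filter_upwards [eventually_ge_atTop r] with K hK
    exact (htel K hK).symm
  have hC : (∏' k, G k) = C := by
    rw [hProd.tprod_eq]
    exact tendsto_nhds_unique ht1 ht2
  rw [hC]
  have hfinal := prod_uu m hm1 q (by omega)
  rw [hCdef, show r+1 = 2*q-1+1 from by rw [hrdef], hfinal]
  congr 1
  · congr 1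
    exact Finset.prod_congr rfl (fun k _ => by rw [Nat.mul_comm])
  · exact Finset.prod_congr rfl (fun k _ => by rw [Nat.mul_comm])
end

section
/- For all positive integers q, n, ∏_{k=1}^{∞} (F_{2n(2k+2q-1)} + F_{2n(2q-1)})/(F_{2n(2k+2q-1)} - F_{2n(2q-1)}) = (1/(√5)^{2q-1}) · ∏_{k=1}^{2q-1} L_{2nk}/F_{2nk}. -/
open Real goldenRatio Filter Finset

theorem lucas_binet : ∀ m : ℕ, (lucas m : ℝ) = φ ^ m + ψ ^ m
  | 0 => by norm_num [lucas]
  | 1 => by norm_num [lucas]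
  | m + 2 => by
    have h1 := lucas_binet m
    have h2 := lucas_binet (m + 1)
    have h : (lucas (m + 2) : ℝ) = (lucas m : ℝ) + lucas (m + 1) := by
      rw [lucas]; push_cast; ring
    rw [h, h1, h2, pow_add, pow_add]
    linear_combination (φ ^ m) * goldenRatio_sq + (ψ ^ m) * goldenConj_sq - ((φ ^ m + ψ ^ m) / 2) * (Real.sq_sqrt (by norm_num : (0:ℝ) ≤ 5))

theorem lucas_pos_s13 : ∀ m : ℕ, 0 < lucas m
  | 0 => by norm_num [lucas]
  | 1 => by norm_num [lucas]
  | m + 2 => by rw [lucas]; exact Nat.add_pos_left (lucas_pos_s13 m) _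

theorem fib_add_of_even (a b : ℕ) (hb : Even b) :
    (Nat.fib (a + 2 * b) : ℝ) + Nat.fib a = Nat.fib (a + b) * lucas b := by
  have hUV : φ ^ b * ψ ^ b = 1 := by
    rw [← mul_pow, goldenRatio_mul_goldenConj]; exact hb.neg_one_pow
  have h5 : Real.sqrt 5 ≠ 0 := by positivity
  rw [Real.coe_fib_eq, Real.coe_fib_eq, Real.coe_fib_eq, lucas_binet,
    ← add_div, div_mul_eq_mul_div, div_eq_div_iff h5 h5,
    pow_add, pow_add, mul_comm 2 b, pow_mul, pow_mul]
  linear_combination (Real.sqrt 5 * (ψ ^ a - φ ^ a)) * hUV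

theorem fib_sub_of_even (a b : ℕ) (hb : Even b) :
    (Nat.fib (a + 2 * b) : ℝ) - Nat.fib a = lucas (a + b) * Nat.fib b := by
  have hUV : φ ^ b * ψ ^ b = 1 := by
    rw [← mul_pow, goldenRatio_mul_goldenConj]; exact hb.neg_one_pow
  have h5 : Real.sqrt 5 ≠ 0 := by positivity
  rw [Real.coe_fib_eq, Real.coe_fib_eq, Real.coe_fib_eq, lucas_binet,
    div_sub_div_same, ← mul_div_assoc, div_eq_div_iff h5 h5,
    pow_add, pow_add, mul_comm 2 b, pow_mul, pow_mul]
  linear_combination (Real.sqrt 5 * (φ ^ a - ψ ^ a)) * hUV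

theorem main_prod (m r : ℕ) (hm : 0 < m) (hme : Even m) (hr : 0 < r) :
    ∏' k : ℕ,
        ((Nat.fib (m * (2 * (k + 1) + r)) : ℝ) + (Nat.fib (m * r) : ℝ)) /
          ((Nat.fib (m * (2 * (k + 1) + r)) : ℝ) - (Nat.fib (m * r) : ℝ)) =
      (1 / Real.sqrt 5) ^ r *
        ∏ k ∈ Finset.Icc 1 r, (lucas (m * k) : ℝ) / (Nat.fib (m * k) : ℝ) := by
  have h5 : (0:ℝ) < Real.sqrt 5 := by positivity
  set f : ℕ → ℝ := fun k =>
      ((Nat.fib (m * (2 * (k + 1) + r)) : ℝ) + (Nat.fib (m * r) : ℝ)) /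
        ((Nat.fib (m * (2 * (k + 1) + r)) : ℝ) - (Nat.fib (m * r) : ℝ)) with hfdef
  set g : ℕ → ℝ := fun j => (Nat.fib (m * j) : ℝ) / (lucas (m * j) : ℝ) with hgdef
  have hfib : ∀ j : ℕ, 0 < j → (0:ℝ) < Nat.fib (m * j) := by
    intro j hj
    exact_mod_cast Nat.fib_pos.mpr (Nat.mul_pos hm hj)
  have hluc : ∀ j : ℕ, (0:ℝ) < lucas (m * j) := fun j => by exact_mod_cast lucas_pos_s13 (m * j)
  have hgpos : ∀ j : ℕ, 0 < j → 0 < g j := fun j hj => div_pos (hfib j hj) (hluc j)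
  have hnum : ∀ k : ℕ, (Nat.fib (m * (2 * (k + 1) + r)) : ℝ) + Nat.fib (m * r) =
      Nat.fib (m * (k + 1 + r)) * lucas (m * (k + 1)) := by
    intro k
    have e1 : m * (2 * (k + 1) + r) = m * r + 2 * (m * (k + 1)) := by ring
    have e2 : m * (k + 1 + r) = m * r + m * (k + 1) := by ring
    rw [e1, e2]; exact fib_add_of_even _ _ (hme.mul_right _)
  have hden : ∀ k : ℕ, (Nat.fib (m * (2 * (k + 1) + r)) : ℝ) - Nat.fib (m * r) =
      lucas (m * (k + 1 + r)) * Nat.fib (m * (k + 1)) := by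
    intro k
    have e1 : m * (2 * (k + 1) + r) = m * r + 2 * (m * (k + 1)) := by ring
    have e2 : m * (k + 1 + r) = m * r + m * (k + 1) := by ring
    rw [e1, e2]; exact fib_sub_of_even _ _ (hme.mul_right _)
  have hfg : ∀ k : ℕ, f k = g (k + 1 + r) / g (k + 1) := by
    intro k
    rw [hfdef, hgdef]
    simp only
    rw [hnum k, hden k]
    have h1 := (hluc (k + 1)).ne'
    have h2 := (hluc (k + 1 + r)).ne'
    have h3 := (hfib (k + 1) (by omega)).ne'
    have h4 := (hfib (k + 1 + r) (by omega)).ne'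
    field_simp
  have hf1 : ∀ k : ℕ, 1 ≤ f k := by
    intro k
    have hd : (0:ℝ) < (Nat.fib (m * (2 * (k + 1) + r)) : ℝ) - Nat.fib (m * r) := by
      rw [hden k]; exact mul_pos (hluc _) (hfib _ (by omega))
    rw [hfdef]
    simp only
    rw [one_le_div hd]
    have : (0:ℝ) ≤ Nat.fib (m * r) := Nat.cast_nonneg _
    linarith
  have hfpos : ∀ k : ℕ, 0 < f k := fun k => lt_of_lt_of_le one_pos (hf1 k)
  -- partial products
  have hP : ∀ K : ℕ, ∏ k ∈ range K, f k =
      (∏ j ∈ Ioc K (K + r), g j) / (∏ j ∈ Ioc 0 r, g j) := by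
    intro K
    have h1 : ∏ k ∈ range K, f k = ∏ j ∈ Ioc 0 K, (g (j + r) / g j) := by
      rw [← Finset.Icc_add_one_left_eq_Ioc, ← Finset.Ico_add_one_right_eq_Icc, Finset.prod_Ico_eq_prod_range, zero_add]
      rw [show K + 1 - 1 = K from by omega]
      exact Finset.prod_congr rfl fun i _ => by rw [hfg i, Nat.add_comm 1 i]
    have h2 : ∏ j ∈ Ioc 0 K, g (j + r) = ∏ j ∈ Ioc r (K + r), g j := by
      rw [← Finset.Icc_add_one_left_eq_Ioc, ← Finset.Ico_add_one_right_eq_Icc, Finset.prod_Ico_eq_prod_range,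
        ← Finset.Icc_add_one_left_eq_Ioc, ← Finset.Ico_add_one_right_eq_Icc, Finset.prod_Ico_eq_prod_range, zero_add]
      rw [show K + 1 - 1 = K from by omega, show K + r + 1 - (r + 1) = K from by omega]
      exact Finset.prod_congr rfl fun i _ => by rw [show 1 + i + r = r + 1 + i from by omega]
    have hA : (∏ j ∈ Ioc 0 r, g j) * (∏ j ∈ Ioc r (K + r), g j) = ∏ j ∈ Ioc 0 (K + r), g j :=
      Finset.prod_Ioc_consecutive g (by omega) (by omega)
    have hB : (∏ j ∈ Ioc 0 K, g j) * (∏ j ∈ Ioc K (K + r), g j) = ∏ j ∈ Ioc 0 (K + r), g j :=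
      Finset.prod_Ioc_consecutive g (by omega) (by omega)
    have hC : (∏ j ∈ Ioc 0 K, g j) ≠ 0 :=
      ne_of_gt (Finset.prod_pos fun j hj => hgpos j (Finset.mem_Ioc.1 hj).1)
    have hD : (∏ j ∈ Ioc 0 r, g j) ≠ 0 :=
      ne_of_gt (Finset.prod_pos fun j hj => hgpos j (Finset.mem_Ioc.1 hj).1)
    rw [h1, Finset.prod_div_distrib, h2, div_eq_div_iff hC hD]
    linear_combination hA - hB
  -- limit of g
  have hgt : Tendsto g atTop (nhds (1 / Real.sqrt 5)) := by
    have habs : |ψ / φ| < 1 := by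
      rw [abs_div, abs_of_neg goldenConj_neg, abs_of_pos goldenRatio_pos, div_lt_one goldenRatio_pos]
      linarith [neg_one_lt_goldenConj, one_lt_goldenRatio]
    have h2 := tendsto_pow_atTop_nhds_zero_of_abs_lt_one habs
    have h3 : Tendsto (fun j : ℕ => m * j) atTop atTop :=
      Filter.tendsto_atTop_atTop.2 fun b => ⟨b, fun a ha => le_trans ha (Nat.le_mul_of_pos_left a hm)⟩
    have hx : Tendsto (fun j : ℕ => (ψ / φ) ^ (m * j)) atTop (nhds 0) := h2.comp h3
    have hlim : Tendsto (fun j : ℕ => (1 - (ψ / φ) ^ (m * j)) / (Real.sqrt 5 * (1 + (ψ / φ) ^ (m * j))))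
        atTop (nhds ((1 - 0) / (Real.sqrt 5 * (1 + 0)))) := by
      exact Tendsto.div (tendsto_const_nhds.sub hx)
        (tendsto_const_nhds.mul (tendsto_const_nhds.add hx)) (by simp [h5.ne'])
    have hval : (1 - (0:ℝ)) / (Real.sqrt 5 * (1 + 0)) = 1 / Real.sqrt 5 := by norm_num
    rw [hval] at hlim
    apply hlim.congr'
    filter_upwards [eventually_ge_atTop 1] with j hj
    have hN : 0 < m * j := Nat.mul_pos hm hj
    have hφ : (0:ℝ) < φ ^ (m * j) := pow_pos goldenRatio_pos _
    have hL : (0:ℝ) < φ ^ (m * j) + ψ ^ (m * j) := by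
      rw [← lucas_binet]; exact_mod_cast lucas_pos_s13 (m * j)
    rw [hgdef]
    simp only
    rw [Real.coe_fib_eq, lucas_binet, div_pow]
    have hI : (0:ℝ) < 1 + ψ ^ (m * j) / φ ^ (m * j) := by
      rw [show (1:ℝ) + ψ ^ (m * j) / φ ^ (m * j) = (φ ^ (m * j) + ψ ^ (m * j)) / φ ^ (m * j) from by
        field_simp]
      exact div_pos hL hφ
    rw [div_eq_div_iff (ne_of_gt (mul_pos h5 hI)) (ne_of_gt hL)]
    field_simp
  -- limit of tail products
  have hKlim : Tendsto (fun K => ∏ j ∈ Ioc K (K + r), g j) atTop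
      (nhds ((1 / Real.sqrt 5) ^ r)) := by
    have he : ∀ K : ℕ, ∏ j ∈ Ioc K (K + r), g j = ∏ i ∈ range r, g (K + 1 + i) := by
      intro K
      rw [← Finset.Icc_add_one_left_eq_Ioc, ← Finset.Ico_add_one_right_eq_Icc, Finset.prod_Ico_eq_prod_range]
      rw [show K + r + 1 - (K + 1) = r from by omega]
    have hfac : ∀ i ∈ range r, Tendsto (fun K : ℕ => g (K + 1 + i)) atTop (nhds (1 / Real.sqrt 5)) := by
      intro i _
      exact hgt.comp (Filter.tendsto_atTop_atTop.2 fun b => ⟨b, fun a ha => by omega⟩)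
    have := tendsto_finset_prod (range r) hfac
    rw [Finset.prod_const, Finset.card_range] at this
    exact this.congr fun K => (he K).symm
  set L : ℝ := (1 / Real.sqrt 5) ^ r / ∏ j ∈ Ioc 0 r, g j with hLdef
  have hPlim : Tendsto (fun K => ∏ k ∈ range K, f k) atTop (nhds L) := by
    simp only [hP]
    exact hKlim.div_const _
  have hPmono : Monotone fun K => ∏ k ∈ range K, f k := by
    apply monotone_nat_of_le_succ
    intro K
    rw [Finset.prod_range_succ]
    exact le_mul_of_one_le_right (Finset.prod_nonneg fun i _ => (hfpos i).le) (hf1 K)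
  have hlubP : IsLUB (Set.range fun K => ∏ k ∈ range K, f k) L :=
    isLUB_of_tendsto_atTop hPmono hPlim
  have hSmono : Monotone fun s : Finset ℕ => ∏ i ∈ s, f i := by
    intro s t hst
    simp only
    rw [← Finset.prod_sdiff hst]
    refine le_mul_of_one_le_left (Finset.prod_nonneg fun i _ => (hfpos i).le) ?_
    calc (1:ℝ) = ∏ _i ∈ t \ s, 1 := (Finset.prod_const_one).symm
    _ ≤ ∏ i ∈ t \ s, f i := Finset.prod_le_prod (fun _ _ => zero_le_one) (fun i _ => hf1 i)
  have hlubS : IsLUB (Set.range fun s : Finset ℕ => ∏ i ∈ s, f i) L := by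
    constructor
    · rintro x ⟨s, rfl⟩
      obtain ⟨K, hK⟩ := s.exists_nat_subset_range
      calc ∏ i ∈ s, f i ≤ ∏ k ∈ range K, f k := hSmono hK
      _ ≤ L := hlubP.1 ⟨K, rfl⟩
    · intro b hb
      exact hlubP.2 (by rintro x ⟨K, rfl⟩; exact hb ⟨range K, rfl⟩)
  have hHP : HasProd f L := tendsto_atTop_isLUB hSmono hlubS
  rw [hHP.tprod_eq, hLdef, div_eq_mul_inv, ← Finset.prod_inv_distrib]
  congr 1
  rw [← Finset.Icc_add_one_left_eq_Ioc]
  exact Finset.prod_congr rfl fun j _ => by rw [hgdef]; simp only; rw [inv_div]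

theorem stmt_13 (q n : ℕ) (hq : 0 < q) (hn : 0 < n) :
    ∏' k : ℕ,
        ((Nat.fib (2 * n * (2 * (k + 1) + 2 * q - 1)) : ℝ) + (Nat.fib (2 * n * (2 * q - 1)) : ℝ)) /
          ((Nat.fib (2 * n * (2 * (k + 1) + 2 * q - 1)) : ℝ) - (Nat.fib (2 * n * (2 * q - 1)) : ℝ)) =
      (1 / Real.sqrt 5 ^ (2 * q - 1)) *
        ∏ k ∈ Finset.Icc 1 (2 * q - 1),
          (lucas (2 * n * k) : ℝ) / (Nat.fib (2 * n * k) : ℝ) := by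
  have h := main_prod (2 * n) (2 * q - 1) (by omega) (even_two_mul n) (by omega)
  rw [show ((1 / Real.sqrt 5) ^ (2 * q - 1) : ℝ) = 1 / Real.sqrt 5 ^ (2 * q - 1) from by
    rw [div_pow, one_pow]] at h
  rw [← h]
  exact tprod_congr fun k => by
    rw [show 2 * (k + 1) + 2 * q - 1 = 2 * (k + 1) + (2 * q - 1) from by omega]
end
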